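/- For real α, β with α² + β² = 1, m ≥ 1, and β² ≤ 1/m, the probability that the product state (α|0⟩+β|1⟩)^{⊗m} has Hamming weight greater than k is at most (m β²)^{k+1} / (k+1)!, i.e., Σ_{j=k+1}^{m} C(m,j) α^{2(m-j)} β^{2j} ≤ (mβ²)^{k+1}/(k+1)!. -/

import Mathlib

open Finset

/-- For `α² + β² = 1`, `m ≥ 1` and `β² ≤ 1/m`, the probability that the product state
`(α|0⟩+β|1⟩)^{⊗m}` has Hamming weight greater than `k` is at most `(mβ²)^{k+1}/(k+1)!`:
`Σ_{j=k+1}^m C(m,j) α^{2(m-j)} β^{2j} ≤ (mβ²)^{k+1}/(k+1)!`. -/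
theorem high_weight_prob_le (m k : ℕ) (hm : 1 ≤ m) (α β : ℝ)
    (hαβ : α ^ 2 + β ^ 2 = 1) (hβ : β ^ 2 ≤ 1 / (m : ℝ)) :
    ∑ j ∈ Finset.Icc (k + 1) m,
        (m.choose j : ℝ) * α ^ (2 * (m - j)) * β ^ (2 * j)
      ≤ ((m : ℝ) * β ^ 2) ^ (k + 1) / (Nat.factorial (k + 1) : ℝ) := by
  set p : ℝ := β ^ 2 with hp
  set q : ℝ := α ^ 2 with hq
  have hp0 : 0 ≤ p := sq_nonneg β
  have hq0 : 0 ≤ q := sq_nonneg α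
  have hpq : q + p = 1 := hαβ
  have hRHS0 : 0 ≤ ((m : ℝ) * p) ^ (k + 1) / (Nat.factorial (k + 1) : ℝ) := by
    apply div_nonneg
    · exact pow_nonneg (mul_nonneg (Nat.cast_nonneg m) hp0) _
    · exact Nat.cast_nonneg _
  by_cases hkm : m < k + 1
  · rw [Finset.Icc_eq_empty (by omega)]
    simpa using hRHS0
  push_neg at hkm
  -- Step 1: LHS ≤ C(m,k+1) * p^(k+1)
  have key : ∑ j ∈ Finset.Icc (k + 1) m,
      (m.choose j : ℝ) * α ^ (2 * (m - j)) * β ^ (2 * j)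
      ≤ (m.choose (k + 1) : ℝ) * p ^ (k + 1) := by
    have hIcc : Finset.Icc (k + 1) m = Finset.Ico (k + 1) (m + 1) := by
      rw [Finset.Ico_add_one_right_eq_Icc]
    rw [hIcc, Finset.sum_Ico_eq_sum_range]
    have hn : m + 1 - (k + 1) = m - (k + 1) + 1 := by omega
    rw [hn]
    have expand : (m.choose (k + 1) : ℝ) * p ^ (k + 1)
        = ∑ i ∈ Finset.range (m - (k + 1) + 1),
            (m.choose (k + 1) : ℝ) * ((m - (k + 1)).choose i : ℝ)
              * p ^ (k + 1) * (p ^ i * q ^ (m - (k + 1) - i)) := by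
      have hbin : ∑ i ∈ Finset.range (m - (k + 1) + 1),
          p ^ i * q ^ (m - (k + 1) - i) * ((m - (k + 1)).choose i : ℝ)
          = (p + q) ^ (m - (k + 1)) := (add_pow p q (m - (k + 1))).symm
      have h1 : (p + q) ^ (m - (k + 1)) = 1 := by
        rw [add_comm, hpq, one_pow]
      calc (m.choose (k + 1) : ℝ) * p ^ (k + 1)
          = (m.choose (k + 1) : ℝ) * p ^ (k + 1) *
              ∑ i ∈ Finset.range (m - (k + 1) + 1),
                p ^ i * q ^ (m - (k + 1) - i) * ((m - (k + 1)).choose i : ℝ) := by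
            rw [hbin, h1, mul_one]
        _ = _ := by
            rw [Finset.mul_sum]
            apply Finset.sum_congr rfl; intro i _; ring
    rw [expand]
    apply Finset.sum_le_sum
    intro i hi
    rw [Finset.mem_range] at hi
    have hi' : i ≤ m - (k + 1) := by omega
    have hj : k + 1 + i ≤ m := by omega
    -- choose bound: C(m, k+1+i) ≤ C(m,k+1) * C(m-(k+1), i)
    have hch : (m.choose (k + 1 + i) : ℝ)
        ≤ (m.choose (k + 1) : ℝ) * ((m - (k + 1)).choose i : ℝ) := by
      have := Nat.choose_mul (n := m) (k := k + 1 + i) (s := k + 1) (by omega)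
      rw [Nat.add_sub_cancel_left] at this
      have h1 : m.choose (k + 1 + i) ≤ m.choose (k + 1) * (m - (k + 1)).choose i := by
        calc m.choose (k + 1 + i)
            ≤ m.choose (k + 1 + i) * (k + 1 + i).choose (k + 1) := by
              have : 1 ≤ (k + 1 + i).choose (k + 1) :=
                Nat.choose_pos (by omega)
              exact Nat.le_mul_of_pos_right _ this
          _ = m.choose (k + 1) * (m - (k + 1)).choose i := this
      exact_mod_cast h1
    have hpow : α ^ (2 * (m - (k + 1 + i))) * β ^ (2 * (k + 1 + i))
        = q ^ (m - (k + 1) - i) * (p ^ (k + 1) * p ^ i) := by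
      have e1 : α ^ (2 * (m - (k + 1 + i))) = q ^ (m - (k + 1) - i) := by
        rw [hq, ← pow_mul]; congr 1; omega
      have e2 : β ^ (2 * (k + 1 + i)) = p ^ (k + 1) * p ^ i := by
        rw [hp, ← pow_add, ← pow_mul]
      rw [e1, e2]
    calc (m.choose (k + 1 + i) : ℝ) * α ^ (2 * (m - (k + 1 + i))) * β ^ (2 * (k + 1 + i))
        = (m.choose (k + 1 + i) : ℝ) * (q ^ (m - (k + 1) - i) * (p ^ (k + 1) * p ^ i)) := by
          rw [mul_assoc, hpow]
      _ ≤ ((m.choose (k + 1) : ℝ) * ((m - (k + 1)).choose i : ℝ))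
            * (q ^ (m - (k + 1) - i) * (p ^ (k + 1) * p ^ i)) := by
          apply mul_le_mul_of_nonneg_right hch
          positivity
      _ = (m.choose (k + 1) : ℝ) * ((m - (k + 1)).choose i : ℝ)
            * p ^ (k + 1) * (p ^ i * q ^ (m - (k + 1) - i)) := by ring
  -- Step 2: C(m,k+1) ≤ m^(k+1)/(k+1)!
  refine key.trans ?_
  have hcb : (m.choose (k + 1) : ℝ) ≤ ((m : ℝ) ^ (k + 1)) / (Nat.factorial (k + 1) : ℝ) := by
    have := Nat.choose_le_pow_div (α := ℝ) (k + 1) m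
    simpa using this
  calc (m.choose (k + 1) : ℝ) * p ^ (k + 1)
      ≤ ((m : ℝ) ^ (k + 1) / (Nat.factorial (k + 1) : ℝ)) * p ^ (k + 1) := by
        apply mul_le_mul_of_nonneg_right hcb (pow_nonneg hp0 _)
    _ = ((m : ℝ) * p) ^ (k + 1) / (Nat.factorial (k + 1) : ℝ) := by
        rw [mul_pow]; ring
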